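/- arXiv:1201.4337 — 3 statements merged into one kernel-verified Lean document; each statement's English description precedes it below -/
import Mathlib

section
/- For every u∈D(L̃₀) one has Re(L̃₀u|u) ≤ (1/2−2/(p−1))‖u‖², where (·|·) and ‖·‖ are the inner product and norm of H. -/
/- STATEMENT 1:
For every u∈D(L̃₀) one has Re(L̃₀u|u) ≤ (1/2−2/(p−1))‖u‖², where
D(L̃₀)={u∈C¹[0,1]×C¹[0,1] : u₁(0)=0} and
(L̃₀u)(ρ)=(u₂'(ρ)−ρu₁'(ρ)−(2/(p−1))u₁(ρ), u₁'(ρ)−ρu₂'(ρ)−(2/(p−1))u₂(ρ)),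
in H=L²(0,1)×L²(0,1) (complex). -/

noncomputable section
open MeasureTheory Set Real Complex

theorem stmt1 (p : ℝ) (hp1 : 1 < p) (hp3 : p ≤ 3)
    (u₁ u₂ u₁' u₂' : ℝ → ℂ)
    (hu₁ : ∀ ρ ∈ Icc (0:ℝ) 1, HasDerivWithinAt u₁ (u₁' ρ) (Icc (0:ℝ) 1) ρ)
    (hu₂ : ∀ ρ ∈ Icc (0:ℝ) 1, HasDerivWithinAt u₂ (u₂' ρ) (Icc (0:ℝ) 1) ρ)
    (hu₁' : ContinuousOn u₁' (Icc (0:ℝ) 1))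
    (hu₂' : ContinuousOn u₂' (Icc (0:ℝ) 1))
    (hbc : u₁ 0 = 0) :
    (∫ ρ in Ioo (0:ℝ) 1,
        ((u₂' ρ - (ρ:ℂ) * u₁' ρ - ((2/(p-1) : ℝ) : ℂ) * u₁ ρ) * (starRingEnd ℂ) (u₁ ρ)
        + (u₁' ρ - (ρ:ℂ) * u₂' ρ - ((2/(p-1) : ℝ) : ℂ) * u₂ ρ) * (starRingEnd ℂ) (u₂ ρ))).re
      ≤ (1/2 - 2/(p-1)) * ∫ ρ in Ioo (0:ℝ) 1, (‖u₁ ρ‖ ^ 2 + ‖u₂ ρ‖ ^ 2) := by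
  have h01 : (0:ℝ) ≤ 1 := zero_le_one
  set c : ℝ := 2/(p-1) with hcdef
  -- continuity of u₁, u₂
  have hc1 : ContinuousOn u₁ (Icc 0 1) := fun ρ hρ => (hu₁ ρ hρ).continuousWithinAt
  have hc2 : ContinuousOn u₂ (Icc 0 1) := fun ρ hρ => (hu₂ ρ hρ).continuousWithinAt
  -- the complex integrand
  set f : ℝ → ℂ := fun ρ =>
      (u₂' ρ - (ρ:ℂ) * u₁' ρ - (c:ℂ) * u₁ ρ) * (starRingEnd ℂ) (u₁ ρ)
      + (u₁' ρ - (ρ:ℂ) * u₂' ρ - (c:ℂ) * u₂ ρ) * (starRingEnd ℂ) (u₂ ρ) with hfdef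
  have hfc : ContinuousOn f (Icc 0 1) := by
    apply ContinuousOn.add
    · exact (((hu₂'.sub (Complex.continuous_ofReal.continuousOn.mul hu₁')).sub
        (continuousOn_const.mul hc1)).mul (continuous_conj.comp_continuousOn hc1))
    · exact (((hu₁'.sub (Complex.continuous_ofReal.continuousOn.mul hu₂')).sub
        (continuousOn_const.mul hc2)).mul (continuous_conj.comp_continuousOn hc2))
  -- norm squared
  have hnsq : ∀ z : ℂ, ‖z‖ ^ 2 = z.re ^ 2 + z.im ^ 2 := by
    intro z
    rw [Complex.sq_norm, Complex.normSq_apply]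
    ring
  -- real functions: components
  set a : ℝ → ℝ := fun t => (u₁ t).re with hadef
  set b : ℝ → ℝ := fun t => (u₁ t).im with hbdef
  set A : ℝ → ℝ := fun t => (u₂ t).re with hAdef
  set B : ℝ → ℝ := fun t => (u₂ t).im with hBdef
  have ha : ∀ ρ ∈ Icc (0:ℝ) 1, HasDerivWithinAt a ((u₁' ρ).re) (Icc (0:ℝ) 1) ρ :=
    fun ρ hρ => (Complex.reCLM.hasFDerivAt.comp_hasDerivWithinAt ρ (hu₁ ρ hρ))
  have hb : ∀ ρ ∈ Icc (0:ℝ) 1, HasDerivWithinAt b ((u₁' ρ).im) (Icc (0:ℝ) 1) ρ :=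
    fun ρ hρ => (Complex.imCLM.hasFDerivAt.comp_hasDerivWithinAt ρ (hu₁ ρ hρ))
  have hA : ∀ ρ ∈ Icc (0:ℝ) 1, HasDerivWithinAt A ((u₂' ρ).re) (Icc (0:ℝ) 1) ρ :=
    fun ρ hρ => (Complex.reCLM.hasFDerivAt.comp_hasDerivWithinAt ρ (hu₂ ρ hρ))
  have hB : ∀ ρ ∈ Icc (0:ℝ) 1, HasDerivWithinAt B ((u₂' ρ).im) (Icc (0:ℝ) 1) ρ :=
    fun ρ hρ => (Complex.imCLM.hasFDerivAt.comp_hasDerivWithinAt ρ (hu₂ ρ hρ))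
  have hac : ContinuousOn a (Icc (0:ℝ) 1) := Complex.continuous_re.comp_continuousOn hc1
  have hbcn : ContinuousOn b (Icc (0:ℝ) 1) := Complex.continuous_im.comp_continuousOn hc1
  have hAc : ContinuousOn A (Icc (0:ℝ) 1) := Complex.continuous_re.comp_continuousOn hc2
  have hBc : ContinuousOn B (Icc (0:ℝ) 1) := Complex.continuous_im.comp_continuousOn hc2
  have hac' : ContinuousOn (fun t => (u₁' t).re) (Icc (0:ℝ) 1) :=
    Complex.continuous_re.comp_continuousOn hu₁'
  have hbc' : ContinuousOn (fun t => (u₁' t).im) (Icc (0:ℝ) 1) :=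
    Complex.continuous_im.comp_continuousOn hu₁'
  have hAc' : ContinuousOn (fun t => (u₂' t).re) (Icc (0:ℝ) 1) :=
    Complex.continuous_re.comp_continuousOn hu₂'
  have hBc' : ContinuousOn (fun t => (u₂' t).im) (Icc (0:ℝ) 1) :=
    Complex.continuous_im.comp_continuousOn hu₂'
  -- g and its derivative gd
  set g : ℝ → ℝ := fun t =>
      a t * A t + b t * B t - t / 2 * (a t * a t + b t * b t + A t * A t + B t * B t)
      with hgdef
  set gd : ℝ → ℝ := fun t =>
      (u₁' t).re * A t + a t * (u₂' t).re + (u₁' t).im * B t + b t * (u₂' t).im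
      - (a t * a t + b t * b t + A t * A t + B t * B t) / 2
      - t * ((u₁' t).re * a t + (u₁' t).im * b t + (u₂' t).re * A t + (u₂' t).im * B t)
      with hgddef
  have hg : ∀ ρ ∈ Icc (0:ℝ) 1, HasDerivWithinAt g (gd ρ) (Icc (0:ℝ) 1) ρ := by
    intro ρ hρ
    have h1 := ((ha ρ hρ).mul (hA ρ hρ)).add ((hb ρ hρ).mul (hB ρ hρ))
    have hd : HasDerivWithinAt (fun t : ℝ => t / 2) ((1:ℝ)/2) (Icc (0:ℝ) 1) ρ :=
      (hasDerivWithinAt_id ρ _).div_const 2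
    have hsq := ((((ha ρ hρ).mul (ha ρ hρ)).add ((hb ρ hρ).mul (hb ρ hρ))).add
      ((hA ρ hρ).mul (hA ρ hρ))).add ((hB ρ hρ).mul (hB ρ hρ))
    have h2 := hd.mul hsq
    have := h1.sub h2
    refine this.congr_deriv ?_
    simp only [hgddef, Pi.add_apply, Pi.mul_apply]
    ring
  -- pointwise identity on Ioo
  have key : ∀ ρ ∈ Ioo (0:ℝ) 1,
      (f ρ).re = gd ρ + (1/2 - c) * (‖u₁ ρ‖ ^ 2 + ‖u₂ ρ‖ ^ 2) := by
    intro ρ _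
    simp only [hfdef, hgddef, hadef, hbdef, hAdef, hBdef, hnsq, Complex.add_re,
      Complex.sub_re, Complex.mul_re, Complex.mul_im, Complex.sub_im,
      Complex.conj_re, Complex.conj_im, Complex.ofReal_re, Complex.ofReal_im]
    ring
  -- integrabilities
  have hIntf : IntegrableOn f (Ioo (0:ℝ) 1) := (hfc.integrableOn_Icc).mono_set Ioo_subset_Icc_self
  have hgdc : ContinuousOn gd (Icc (0:ℝ) 1) := by
    rw [hgddef]
    apply ContinuousOn.sub
    apply ContinuousOn.sub
    · exact (((hac'.mul hAc).add (hac.mul hAc')).add (hbc'.mul hBc)).add (hbcn.mul hBc')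
    · exact ((((hac.mul hac).add (hbcn.mul hbcn)).add (hAc.mul hAc)).add
        (hBc.mul hBc)).div_const 2
    · exact continuousOn_id.mul ((((hac'.mul hac).add (hbc'.mul hbcn)).add
        (hAc'.mul hAc)).add (hBc'.mul hBc))
  have hgc : ContinuousOn g (Icc (0:ℝ) 1) := by
    rw [hgdef]
    exact ((hac.mul hAc).add (hbcn.mul hBc)).sub ((continuousOn_id.div_const 2).mul
      ((((hac.mul hac).add (hbcn.mul hbcn)).add (hAc.mul hAc)).add (hBc.mul hBc)))
  have hhc : ContinuousOn (fun ρ => ‖u₁ ρ‖ ^ 2 + ‖u₂ ρ‖ ^ 2) (Icc (0:ℝ) 1) :=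
    ((hc1.norm.pow 2).add (hc2.norm.pow 2))
  have hIntgd : IntegrableOn gd (Ioo (0:ℝ) 1) :=
    (hgdc.integrableOn_Icc).mono_set Ioo_subset_Icc_self
  have hInth : IntegrableOn (fun ρ => ‖u₁ ρ‖ ^ 2 + ‖u₂ ρ‖ ^ 2) (Ioo (0:ℝ) 1) :=
    (hhc.integrableOn_Icc).mono_set Ioo_subset_Icc_self
  -- Re of integral
  have step1 : (∫ ρ in Ioo (0:ℝ) 1, f ρ).re = ∫ ρ in Ioo (0:ℝ) 1, (f ρ).re := by
    simpa using (integral_re hIntf).symm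
  -- FTC
  have hftc : ∫ ρ in Ioo (0:ℝ) 1, gd ρ = g 1 - g 0 := by
    rw [← integral_Ioc_eq_integral_Ioo, ← intervalIntegral.integral_of_le h01]
    apply intervalIntegral.integral_eq_sub_of_hasDeriv_right_of_le h01 hgc
    · intro x hx
      exact ((hg x (Ioo_subset_Icc_self hx)).hasDerivAt
        (Icc_mem_nhds hx.1 hx.2)).hasDerivWithinAt
    · rw [intervalIntegrable_iff_integrableOn_Ioo_of_le h01]
      exact hIntgd
  have hg0 : g 0 = 0 := by
    simp [hgdef, hadef, hbdef, hbc]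
  have hg1 : g 1 ≤ 0 := by
    simp only [hgdef]
    nlinarith [sq_nonneg (a 1 - A 1), sq_nonneg (b 1 - B 1)]
  -- assemble
  have step2 : ∫ ρ in Ioo (0:ℝ) 1, (f ρ).re
      = (g 1 - g 0) + (1/2 - c) * ∫ ρ in Ioo (0:ℝ) 1, (‖u₁ ρ‖ ^ 2 + ‖u₂ ρ‖ ^ 2) := by
    rw [← hftc, ← integral_const_mul, ← integral_add hIntgd (hInth.const_mul _)]
    exact setIntegral_congr_fun measurableSet_Ioo key
  calc (∫ ρ in Ioo (0:ℝ) 1, f ρ).re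
      = ∫ ρ in Ioo (0:ℝ) 1, (f ρ).re := step1
    _ = (g 1 - g 0) + (1/2 - c) * ∫ ρ in Ioo (0:ℝ) 1, (‖u₁ ρ‖ ^ 2 + ‖u₂ ρ‖ ^ 2) := step2
    _ ≤ (1/2 - c) * ∫ ρ in Ioo (0:ℝ) 1, (‖u₁ ρ‖ ^ 2 + ‖u₂ ρ‖ ^ 2) := by
        rw [hg0, sub_zero]
        exact add_le_of_nonpos_left hg1
end
end

section
/- Fix p with 1<p≤3. Every weak solution h∈H²_loc(0,1) of the ordinary differential equation −(1−ρ²)h''(ρ)+(2(p+1)/(p−1))ρh'(ρ)−(2(p+1)/(p−1))h(ρ)=0 on (0,1) that extends continuously to [0,1] is a constant multiple of h₀(ρ)=ρ. (Indeed a second, linearly independent solution has the form h₁(ρ)=(1−ρ²)^{−2/(p−1)}·h̃₁(ρ) with h̃₁ continuous on [0,1] and h̃₁(1)≠0, hence is unbounded near ρ=1.) -/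
/- STATEMENT 8:
Fix p with 1<p≤3. Every weak solution h∈H²_loc(0,1) of
−(1−ρ²)h''+(2(p+1)/(p−1))ρh'−(2(p+1)/(p−1))h=0 on (0,1) that extends
continuously to [0,1] is a constant multiple of h₀(ρ)=ρ.
(A weak H²_loc solution is encoded by functions h, h', h'' where h' is the
derivative of h on (0,1), h' is locally absolutely continuous with density
h'' ∈ L²_loc(0,1), and the equation holds a.e. on (0,1).) -/

noncomputable section
open MeasureTheory Set Real
open Filter Topology

set_option maxHeartbeats 2000000 in
theorem stmt8 (p : ℝ) (hp1 : 1 < p) (hp3 : p ≤ 3)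
    (h h' h'' : ℝ → ℝ)
    (hcont : ContinuousOn h (Icc (0:ℝ) 1))
    (hder : ∀ ρ ∈ Ioo (0:ℝ) 1, HasDerivAt h (h' ρ) ρ)
    (hL2loc : ∀ a b : ℝ, 0 < a → b < 1 → MemLp h'' 2 (volume.restrict (Ioo a b)))
    (hAC : ∀ ρ₀ ∈ Ioo (0:ℝ) 1, ∀ ρ ∈ Ioo (0:ℝ) 1,
      h' ρ = h' ρ₀ + ∫ s in ρ₀..ρ, h'' s)
    (hode : ∀ᵐ ρ ∂(volume.restrict (Ioo (0:ℝ) 1)),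
      -(1 - ρ ^ 2) * h'' ρ + (2 * (p + 1) / (p - 1)) * ρ * h' ρ
        - (2 * (p + 1) / (p - 1)) * h ρ = 0) :
    ∃ c : ℝ, ∀ ρ ∈ Icc (0:ℝ) 1, h ρ = c * ρ := by
  have hp0 : (0:ℝ) < p - 1 := by linarith
  obtain ⟨q, hqdef⟩ : ∃ _x : ℝ, _x = (p+1)/(p-1) := ⟨_, rfl⟩
  have hq2 : 2 ≤ q := by rw [hqdef, le_div_iff₀ hp0]; linarith
  have hq0 : 0 < q := by linarith
  have hβ : 2 * (p + 1) / (p - 1) = 2 * q := by rw [hqdef]; ring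
  have hpos : ∀ ρ ∈ Ioo (0:ℝ) 1, 0 < 1 - ρ^2 := by
    intro ρ hρ; nlinarith [hρ.1, hρ.2]
  -- interval integrability of h''
  have hInt : ∀ a b : ℝ, a ∈ Ioo (0:ℝ) 1 → b ∈ Ioo (0:ℝ) 1 →
      IntervalIntegrable h'' volume a b := by
    intro a b ha hb
    set a' : ℝ := min a b / 2 with ha'
    set b' : ℝ := (max a b + 1) / 2 with hb'
    have ha'0 : 0 < a' := by
      have := lt_min ha.1 hb.1; positivity
    have hb'1 : b' < 1 := by
      have := max_lt ha.2 hb.2; rw [hb']; linarith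
    have hfin : IsFiniteMeasure (volume.restrict (Ioo a' b')) := by
      constructor
      rw [Measure.restrict_apply_univ]
      exact measure_Ioo_lt_top
    have hint : IntegrableOn h'' (Ioo a' b') volume :=
      (hL2loc a' b' ha'0 hb'1).integrable one_le_two
    have hsub : uIcc a b ⊆ Ioo a' b' := by
      rw [uIcc]
      intro x hx
      constructor
      · have : a' < min a b := by
          have := lt_min ha.1 hb.1
          rw [ha']; linarith
        exact lt_of_lt_of_le this (by exact hx.1)
      · have : max a b < b' := by
          have h1 := ha.2; have h2 := hb.2
          rw [hb']
          rcases max_cases a b with ⟨he, _⟩ | ⟨he, _⟩ <;> rw [he] <;> linarith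
        exact lt_of_le_of_lt hx.2 this
    exact (hint.mono_set hsub).intervalIntegrable
  -- continuity of h' on (0,1)
  have h'cont : ContinuousOn h' (Ioo (0:ℝ) 1) := by
    intro x hx
    have hax : x/2 ∈ Ioo (0:ℝ) 1 := ⟨by linarith [hx.1], by linarith [hx.2]⟩
    have hbx : (x+1)/2 ∈ Ioo (0:ℝ) 1 := ⟨by linarith [hx.1], by linarith [hx.2]⟩
    have hab : x/2 ≤ (x+1)/2 := by linarith [hx.1]
    have hP : ContinuousOn (fun ρ => ∫ s in x..ρ, h'' s) (uIcc (x/2) ((x+1)/2)) :=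
      intervalIntegral.continuousOn_primitive_interval' (hInt _ _ hax hbx)
        (by rw [uIcc_of_le hab]; constructor <;> [linarith [hx.1]; linarith [hx.2]])
    have hPx : ContinuousAt (fun ρ => h' x + ∫ s in x..ρ, h'' s) x := by
      refine continuousAt_const.add (hP.continuousAt ?_)
      rw [uIcc_of_le hab]
      exact Icc_mem_nhds (by linarith [hx.1]) (by linarith [hx.2])
    refine (hPx.congr ?_).continuousWithinAt
    filter_upwards [Ioo_mem_nhds hx.1 hx.2] with y hy
    exact (hAC x hx y hy).symm
  have hcontIoo : ContinuousOn h (Ioo (0:ℝ) 1) := fun x hx =>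
    ((hder x hx).continuousAt).continuousWithinAt
  obtain ⟨W, hWdef⟩ : ∃ _x : ℝ → ℝ, _x = fun ρ => ρ * h' ρ - h ρ := ⟨_, rfl⟩
  obtain ⟨H, hHdef⟩ : ∃ _x : ℝ → ℝ, _x = fun ρ => 2 * q * W ρ / (1 - ρ^2) := ⟨_, rfl⟩
  have hWcont : ContinuousOn W (Ioo (0:ℝ) 1) := by
    rw [hWdef]; exact (continuousOn_id.mul h'cont).sub hcontIoo
  have hHcont : ContinuousOn H (Ioo (0:ℝ) 1) := by
    rw [hHdef]
    refine (continuousOn_const.mul hWcont).div ?_ (fun x hx => (hpos x hx).ne')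
    exact (continuousOn_const.sub (continuousOn_pow 2))
  -- rewrite the ODE: h'' = H a.e.
  have hHae : ∀ᵐ ρ ∂(volume.restrict (Ioo (0:ℝ) 1)), h'' ρ = H ρ := by
    filter_upwards [hode, ae_restrict_mem measurableSet_Ioo] with ρ h1 h2
    have hne : 1 - ρ^2 ≠ 0 := (hpos ρ h2).ne'
    rw [hβ] at h1
    simp only [hHdef, hWdef]
    field_simp
    linarith [h1]
  have hHaeImp : ∀ᵐ ρ ∂(volume : Measure ℝ), ρ ∈ Ioo (0:ℝ) 1 → h'' ρ = H ρ :=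
    (ae_restrict_iff' measurableSet_Ioo).1 hHae
  have hIntCongr : ∀ a ∈ Ioo (0:ℝ) 1, ∀ b ∈ Ioo (0:ℝ) 1,
      (∫ s in a..b, h'' s) = ∫ s in a..b, H s := by
    intro a ha b hb
    refine intervalIntegral.integral_congr_ae ?_
    filter_upwards [hHaeImp] with x hx hmem
    refine hx ?_
    rw [uIoc] at hmem
    exact ⟨lt_trans (lt_min ha.1 hb.1) hmem.1, lt_of_le_of_lt hmem.2 (max_lt ha.2 hb.2)⟩
  -- h' is differentiable with derivative H
  have hd' : ∀ ρ ∈ Ioo (0:ℝ) 1, HasDerivAt h' (H ρ) ρ := by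
    intro ρ hρ
    have hca : ContinuousAt H ρ := hHcont.continuousAt (Ioo_mem_nhds hρ.1 hρ.2)
    have hmeas : StronglyMeasurableAtFilter H (𝓝 ρ) :=
      hHcont.stronglyMeasurableAtFilter isOpen_Ioo ρ hρ
    have h0 : HasDerivAt (fun u => ∫ x in ρ..u, H x) (H ρ) ρ :=
      intervalIntegral.integral_hasDerivAt_right
        (IntervalIntegrable.refl) hmeas hca
    have h1 : HasDerivAt (fun u => h' ρ + ∫ x in ρ..u, H x) (H ρ) ρ :=
      h0.const_add _
    refine h1.congr_of_eventuallyEq ?_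
    filter_upwards [Ioo_mem_nhds hρ.1 hρ.2] with y hy
    rw [hAC ρ hρ y hy, hIntCongr ρ hρ y hy]
  -- W has derivative ρ * H ρ
  have hdW : ∀ ρ ∈ Ioo (0:ℝ) 1, HasDerivAt W (ρ * H ρ) ρ := by
    intro ρ hρ
    have h2 := ((hasDerivAt_id ρ).mul (hd' ρ hρ)).sub (hder ρ hρ)
    rw [hWdef]
    simp at h2; exact h2
  obtain ⟨G, hGdef⟩ : ∃ _x : ℝ → ℝ, _x = fun ρ => (1 - ρ^2) ^ q := ⟨_, rfl⟩
  obtain ⟨F, hFdef⟩ : ∃ _x : ℝ → ℝ, _x = fun ρ => W ρ * G ρ := ⟨_, rfl⟩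
  have hdF : ∀ ρ ∈ Ioo (0:ℝ) 1, HasDerivAt F 0 ρ := by
    intro ρ hρ
    have ht := hpos ρ hρ
    have h1 : HasDerivAt (fun x : ℝ => 1 - x^2) (-(2*ρ)) ρ := by
      simpa using (hasDerivAt_pow 2 ρ).const_sub 1
    have hG : HasDerivAt G (q * (1-ρ^2)^(q-1) * (-(2*ρ))) ρ := by
      rw [hGdef]
      have := h1.rpow_const (p := q) (Or.inl ht.ne')
      convert this using 1
      ring
    have := (hdW ρ hρ).mul hG
    rw [hFdef]; refine this.congr_deriv ?_
    have ht' : (1-ρ^2)^q = (1-ρ^2)^(q-1) * (1-ρ^2) := by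
      rw [← Real.rpow_add_one ht.ne']
      ring_nf
    simp only [hHdef, hGdef]
    rw [ht']
    field_simp
    ring
  -- functions with zero derivative on (0,1) are constant there
  have constIoo : ∀ (f : ℝ → ℝ), (∀ x ∈ Ioo (0:ℝ) 1, HasDerivAt f 0 x) →
      ∀ x ∈ Ioo (0:ℝ) 1, ∀ y ∈ Ioo (0:ℝ) 1, f x = f y := by
    intro f hf
    have key : ∀ x ∈ Ioo (0:ℝ) 1, ∀ y ∈ Ioo (0:ℝ) 1, x ≤ y → f y = f x := by
      intro x hx y hy hxy
      have hsub : Icc x y ⊆ Ioo (0:ℝ) 1 := fun z hz =>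
        ⟨lt_of_lt_of_le hx.1 hz.1, lt_of_le_of_lt hz.2 hy.2⟩
      have hc : ContinuousOn f (Icc x y) := fun z hz =>
        ((hf z (hsub hz)).continuousAt).continuousWithinAt
      have hdz : ∀ z ∈ Ico x y, HasDerivWithinAt f 0 (Ici z) z := fun z hz =>
        (hf z (hsub ⟨hz.1, le_of_lt hz.2⟩)).hasDerivWithinAt
      exact constant_of_has_deriv_right_zero hc hdz y ⟨hxy, le_refl y⟩
    intro x hx y hy
    rcases le_total x y with hh | hh
    · exact (key x hx y hy hh).symm
    · exact key y hy x hx hh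
  have hhalf : (1/2 : ℝ) ∈ Ioo (0:ℝ) 1 := by norm_num
  obtain ⟨C, hCdef⟩ : ∃ _x : ℝ, _x = F (1/2) := ⟨_, rfl⟩
  have hFC : ∀ ρ ∈ Ioo (0:ℝ) 1, W ρ * G ρ = C := by
    intro ρ hρ
    have h2 := constIoo F hdF ρ hρ (1/2) hhalf
    rw [hCdef, ← h2, hFdef]
  -- C must be zero
  have hC0 : C = 0 := by
    by_contra hC
    obtain ⟨M, hM⟩ := (isCompact_Icc).exists_bound_of_continuousOn hcont
    have hM0 : 0 ≤ M := le_trans (norm_nonneg _) (hM 0 (by norm_num))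
    obtain ⟨v, hvdef⟩ : ∃ _x : ℝ → ℝ, _x = fun ρ => C * (h ρ / ρ) := ⟨_, rfl⟩
    obtain ⟨B, hBdef⟩ : ∃ _x : ℝ, _x = 2 * |C| * M := ⟨_, rfl⟩
    have hvb : ∀ ρ : ℝ, ρ ∈ Icc (1/2:ℝ) 1 → v ρ ≤ B := by
      intro ρ hρ
      have hρpos : (0:ℝ) < ρ := by linarith [hρ.1]
      have h1 : |h ρ| ≤ M := by
        have := hM ρ ⟨by linarith [hρ.1], hρ.2⟩
        rwa [Real.norm_eq_abs] at this
      have habs : |h ρ / ρ| ≤ 2 * M := by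
        rw [abs_div, abs_of_pos hρpos, div_le_iff₀ hρpos]
        nlinarith [hρ.1]
      rw [hvdef, hBdef]
      calc C * (h ρ / ρ) ≤ |C * (h ρ / ρ)| := le_abs_self _
        _ = |C| * |h ρ / ρ| := abs_mul _ _
        _ ≤ |C| * (2 * M) := mul_le_mul_of_nonneg_left habs (abs_nonneg C)
        _ = 2 * |C| * M := by ring
    have hmemI : ∀ ρ : ℝ, ρ ∈ Ioo (1/2:ℝ) 1 → ρ ∈ Ioo (0:ℝ) 1 :=
      fun ρ hρ => ⟨by linarith [hρ.1], hρ.2⟩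
    have hGpos : ∀ ρ ∈ Ioo (0:ℝ) 1, 0 < G ρ := by
      intro ρ hρ
      rw [hGdef]; exact Real.rpow_pos_of_pos (hpos ρ hρ) q
    have hdv : ∀ ρ ∈ Ioo (1/2:ℝ) 1, HasDerivAt v (C^2 / (G ρ * ρ^2)) ρ := by
      intro ρ hρ'
      have hρ := hmemI ρ hρ'
      rw [hvdef]
      have h3 := ((hder ρ hρ).div (hasDerivAt_id ρ) hρ.1.ne').const_mul C
      simp only [id_eq, mul_one] at h3
      have hGp := hGpos ρ hρ
      have hWeq : h' ρ * ρ - h ρ = C / G ρ := by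
        have h4 := hFC ρ hρ
        rw [hWdef] at h4; simp only at h4
        field_simp
        linarith [h4]
      rw [hWeq] at h3
      refine h3.congr_deriv ?_
      ring
    obtain ⟨u, hudef⟩ : ∃ _x : ℝ → ℝ, _x = fun ρ => v ρ - C^2/4 * (1-ρ)⁻¹ := ⟨_, rfl⟩
    have hdu : ∀ ρ ∈ Ioo (1/2:ℝ) 1,
        HasDerivAt u (C^2/(G ρ * ρ^2) - C^2/4 * ((1-ρ)^2)⁻¹) ρ := by
      intro ρ hρ'
      rw [hudef]
      have hne : (1:ℝ) - ρ ≠ 0 := by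
        have := hρ'.2; intro hz; linarith
      have h6 : HasDerivAt (fun x : ℝ => 1 - x) (-1) ρ := by
        simpa using (hasDerivAt_id ρ).const_sub 1
      have h5 : HasDerivAt (fun x : ℝ => (1-x)⁻¹) (((1-ρ)^2)⁻¹) ρ := by
        have := h6.inv hne
        refine this.congr_deriv ?_
        ring
      exact (hdv ρ hρ').sub (h5.const_mul (C^2/4))
    have hnn : ∀ ρ ∈ Ioo (1/2:ℝ) 1,
        0 ≤ C^2/(G ρ * ρ^2) - C^2/4 * ((1-ρ)^2)⁻¹ := by
      intro ρ hρ'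
      have hρ := hmemI ρ hρ'
      have ht0 : 0 < 1 - ρ^2 := hpos ρ hρ
      have ht1 : 1 - ρ^2 ≤ 1 := by nlinarith [hρ.1]
      have hGle : G ρ ≤ (1-ρ^2)^(2:ℕ) := by
        rw [hGdef]
        calc (1-ρ^2)^(q:ℝ) ≤ (1-ρ^2)^(2:ℝ) :=
              Real.rpow_le_rpow_of_exponent_ge ht0 ht1 hq2
          _ = (1-ρ^2)^(2:ℕ) := by rw [← Real.rpow_natCast]; norm_num
      have hGp := hGpos ρ hρ
      have hρ2 : ρ^2 ≤ 1 := by nlinarith [hρ.2, hρ.1]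
      have k1 : G ρ * ρ^2 ≤ G ρ := by nlinarith [hGp, hρ2]
      have k2 : (1-ρ^2)^(2:ℕ) ≤ 4 * (1-ρ)^2 := by
        nlinarith [mul_nonneg (mul_nonneg (sq_nonneg (1-ρ))
          (by linarith [hρ.2] : (0:ℝ) ≤ 1-ρ)) (by linarith [hρ.1] : (0:ℝ) ≤ ρ+3)]
      have key : G ρ * ρ^2 ≤ 4 * (1-ρ)^2 := by linarith [hGle, k1, k2]
      have h8 : (0:ℝ) < 1 - ρ := by linarith [hρ'.2]
      have h1ρ : (0:ℝ) < (1-ρ)^2 := by positivity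
      have e1 : C^2/4*((1-ρ)^2)⁻¹ = C^2/(4*(1-ρ)^2) := by
        field_simp
      have hge : 0 < G ρ * ρ^2 := mul_pos hGp (pow_pos hρ.1 2)
      rw [sub_nonneg, e1, div_le_div_iff₀ (by positivity) hge]
      exact mul_le_mul_of_nonneg_left key (sq_nonneg C)
    obtain ⟨δ, hδdef⟩ : ∃ _x : ℝ, _x = min (1/8:ℝ) (C^2/(4*(B - u (3/4) + 1))) := ⟨_, rfl⟩
    have hu3B : u (3/4:ℝ) ≤ B := by
      have hvb3 := hvb (3/4) ⟨by norm_num, by norm_num⟩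
      have hx : u (3/4:ℝ) = v (3/4) - C^2/4 * ((1:ℝ)-3/4)⁻¹ := by rw [hudef]
      rw [hx]
      have e2 : ((1:ℝ) - 3/4)⁻¹ = 4 := by norm_num
      rw [e2]
      nlinarith [sq_nonneg C, hvb3]
    have hden : 0 < B - u (3/4) + 1 := by linarith
    have hC2 : 0 < C^2 := by positivity
    have hδpos : 0 < δ := by rw [hδdef]; exact lt_min (by norm_num) (by positivity)
    have hδ18 : δ ≤ 1/8 := by rw [hδdef]; exact min_le_left _ _
    have hδ2 : δ ≤ C^2/(4*(B - u (3/4) + 1)) := by rw [hδdef]; exact min_le_right _ _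
    obtain ⟨r, hrdef⟩ : ∃ _x : ℝ, _x = 1 - δ := ⟨_, rfl⟩
    have hr1 : r < 1 := by rw [hrdef]; linarith
    have hr34 : (3/4:ℝ) ≤ r := by rw [hrdef]; linarith
    have hsub2 : Icc (3/4:ℝ) r ⊆ Ioo (1/2:ℝ) 1 := fun z hz =>
      ⟨by linarith [hz.1], lt_of_le_of_lt hz.2 hr1⟩
    have humono : MonotoneOn u (Icc (3/4:ℝ) r) := by
      apply monotoneOn_of_deriv_nonneg (convex_Icc _ _)
      · exact fun z hz => ((hdu z (hsub2 hz)).continuousAt).continuousWithinAt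
      · intro z hz
        rw [interior_Icc] at hz
        exact ((hdu z (hsub2 (Ioo_subset_Icc_self hz))).differentiableAt).differentiableWithinAt
      · intro z hz
        rw [interior_Icc] at hz
        have hz' := hsub2 (Ioo_subset_Icc_self hz)
        rw [(hdu z hz').deriv]
        exact hnn z hz'
    have h34r : u (3/4:ℝ) ≤ u r :=
      humono (left_mem_Icc.2 hr34) (right_mem_Icc.2 hr34) hr34
    have h7 : (B - u (3/4) + 1) * δ ≤ C^2/4 := by
      have h9 := mul_le_mul_of_nonneg_left hδ2 hden.le
      calc (B - u (3/4) + 1) * δ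
          ≤ (B - u (3/4) + 1) * (C^2/(4*(B - u (3/4)+1))) := h9
        _ = C^2/4 := by field_simp
    have h8 : B - u (3/4) + 1 ≤ C^2/4 * δ⁻¹ := by
      have h9 := mul_le_mul_of_nonneg_right h7 (inv_nonneg.2 hδpos.le)
      calc B - u (3/4) + 1 = (B - u (3/4) + 1) * δ * δ⁻¹ := by field_simp
        _ ≤ C^2/4 * δ⁻¹ := h9
    have hvr : v r = u r + C^2/4 * (1-r)⁻¹ := by
      have hx : u r = v r - C^2/4 * (1-r)⁻¹ := by rw [hudef]
      rw [hx]; ring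
    have h1r : (1:ℝ) - r = δ := by rw [hrdef]; ring
    have hvbr := hvb r ⟨by linarith, hr1.le⟩
    rw [hvr, h1r] at hvbr
    linarith [h34r, h8, hvbr]
  -- conclude W = 0 on (0,1)
  have hW0 : ∀ ρ ∈ Ioo (0:ℝ) 1, W ρ = 0 := by
    intro ρ hρ
    have hGpos : 0 < G ρ := by
      rw [hGdef]; exact Real.rpow_pos_of_pos (hpos ρ hρ) q
    have := hFC ρ hρ
    rw [hC0] at this
    exact (mul_eq_zero.1 this).resolve_right hGpos.ne'
  -- h/ρ is constant
  obtain ⟨v, hvdef⟩ : ∃ _x : ℝ → ℝ, _x = fun ρ => h ρ / ρ := ⟨_, rfl⟩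
  have hdv : ∀ ρ ∈ Ioo (0:ℝ) 1, HasDerivAt v 0 ρ := by
    intro ρ hρ
    rw [hvdef]
    have h3 := (hder ρ hρ).div (hasDerivAt_id ρ) hρ.1.ne'
    simp only [id_eq, mul_one] at h3
    have hw := hW0 ρ hρ
    rw [hWdef] at hw; simp only at hw
    have hz : (h' ρ * ρ - h ρ) / ρ^2 = 0 := by
      rw [div_eq_zero_iff]; left; linarith
    rwa [hz] at h3
  obtain ⟨c, hcdef⟩ : ∃ _x : ℝ, _x = 2 * h (1/2) := ⟨_, rfl⟩
  have hIoo : ∀ ρ ∈ Ioo (0:ℝ) 1, h ρ = c * ρ := by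
    intro ρ hρ
    have := constIoo v hdv ρ hρ (1/2) hhalf
    simp only [hvdef] at this
    have hρ0 : ρ ≠ 0 := hρ.1.ne'
    rw [div_eq_div_iff hρ0 (by norm_num : (1/2:ℝ) ≠ 0)] at this
    rw [hcdef]; linarith [this]
  refine ⟨c, ?_⟩
  intro ρ hρ
  rcases eq_or_lt_of_le hρ.1 with h0 | h0
  · rw [← h0, mul_zero]
    have hne : (𝓝[Ioo (0:ℝ) 1] (0:ℝ)).NeBot := by
      apply mem_closure_iff_nhdsWithin_neBot.1
      rw [closure_Ioo (by norm_num : (0:ℝ) ≠ 1)]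
      exact ⟨le_refl 0, by norm_num⟩
    have t1 : Tendsto h (𝓝[Ioo (0:ℝ) 1] 0) (𝓝 (h 0)) :=
      (hcont 0 ⟨le_refl 0, by norm_num⟩).mono Ioo_subset_Icc_self
    have t2 : Tendsto h (𝓝[Ioo (0:ℝ) 1] 0) (𝓝 (c * 0)) := by
      refine Tendsto.congr' ?_ (((continuous_const.mul continuous_id).tendsto 0).mono_left nhdsWithin_le_nhds)
      exact (eventuallyEq_nhdsWithin_of_eqOn (fun x hx => (hIoo x hx).symm))
    have := tendsto_nhds_unique t1 t2
    rw [mul_zero] at this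
    exact this
  rcases eq_or_lt_of_le hρ.2 with h1 | h1
  · rw [h1, mul_one]
    have hne : (𝓝[Ioo (0:ℝ) 1] (1:ℝ)).NeBot := by
      apply mem_closure_iff_nhdsWithin_neBot.1
      rw [closure_Ioo (by norm_num : (0:ℝ) ≠ 1)]
      exact ⟨by norm_num, le_refl 1⟩
    have t1 : Tendsto h (𝓝[Ioo (0:ℝ) 1] 1) (𝓝 (h 1)) :=
      (hcont 1 ⟨by norm_num, le_refl 1⟩).mono Ioo_subset_Icc_self
    have t2 : Tendsto h (𝓝[Ioo (0:ℝ) 1] 1) (𝓝 (c * 1)) := by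
      refine Tendsto.congr' ?_ (((continuous_const.mul continuous_id).tendsto 1).mono_left nhdsWithin_le_nhds)
      exact (eventuallyEq_nhdsWithin_of_eqOn (fun x hx => (hIoo x hx).symm))
    have := tendsto_nhds_unique t1 t2
    rw [mul_one] at this
    exact this
  exact hIoo ρ ⟨h0, h1⟩
end
end

section
/- Fix p with 1<p≤3. There exists a constant c>0 such that for all x,y∈ℝ and all ρ∈[0,1]: |n(x,ρ)| ≤ c·ρ·|x|²·⟨x⟩^{p−2}, |∂_x n(x,ρ)| ≤ c·ρ·|x|·⟨x⟩^{p−2}, and |n(x,ρ)−n(y,ρ)| ≤ c·ρ·|x−y|·(|x|⟨x⟩^{p−2}+|y|⟨y⟩^{p−2}). -/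
/- STATEMENT 13:
Fix p with 1<p≤3. There exists c>0 such that for all x,y∈ℝ and ρ∈[0,1]:
|n(x,ρ)| ≤ c·ρ·|x|²·⟨x⟩^{p−2},  |∂_x n(x,ρ)| ≤ c·ρ·|x|·⟨x⟩^{p−2},
|n(x,ρ)−n(y,ρ)| ≤ c·ρ·|x−y|·(|x|⟨x⟩^{p−2}+|y|⟨y⟩^{p−2}),
where n(x,ρ)=ρ(|κ₀^{1/(p−1)}+x|^{p−1}(κ₀^{1/(p−1)}+x)−pκ₀x−κ₀^{p/(p−1)}),
κ₀=2(p+1)/(p−1)², ⟨x⟩=√(1+x²). -/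

noncomputable section
open Real

/-- κ₀ = 2(p+1)/(p−1)². -/
def kap0 (p : ℝ) : ℝ := 2 * (p + 1) / (p - 1) ^ 2

/-- κ₀^{1/(p−1)}. -/
def cp (p : ℝ) : ℝ := kap0 p ^ (1 / (p - 1))

/-- The nonlinearity n(x,ρ). -/
def nfun (p x ρ : ℝ) : ℝ :=
  ρ * (|cp p + x| ^ (p - 1) * (cp p + x) - p * kap0 p * x - kap0 p ^ (p / (p - 1)))

/-- The japanese bracket ⟨x⟩ = √(1+x²). -/
def jb (x : ℝ) : ℝ := Real.sqrt (1 + x ^ 2)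

namespace Stmt13Aux
open Filter Set

variable {p : ℝ}

lemma kap0_pos (hp1 : 1 < p) : 0 < kap0 p := by
  have h1 : (0:ℝ) < (p-1)^2 := pow_pos (by linarith) 2
  have h2 : (0:ℝ) < 2*(p+1) := by linarith
  exact div_pos h2 h1

lemma cp_pos (hp1 : 1 < p) : 0 < cp p := Real.rpow_pos_of_pos (kap0_pos hp1) _

lemma cp_rpow (hp1 : 1 < p) : cp p ^ (p - 1) = kap0 p := by
  unfold cp
  rw [← Real.rpow_mul (kap0_pos hp1).le, one_div,
    inv_mul_cancel₀ (by linarith : p - 1 ≠ 0), Real.rpow_one]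

lemma cp_rpow_p (hp1 : 1 < p) : kap0 p ^ (p / (p - 1)) = cp p ^ p := by
  unfold cp
  rw [← Real.rpow_mul (kap0_pos hp1).le, div_eq_mul_inv, one_div, mul_comm p]

lemma one_le_jb (x : ℝ) : 1 ≤ jb x := by
  rw [show (1:ℝ) = Real.sqrt 1 by simp]
  exact Real.sqrt_le_sqrt (by nlinarith)

lemma jb_pos (x : ℝ) : 0 < jb x := lt_of_lt_of_le one_pos (one_le_jb x)

lemma abs_le_jb (x : ℝ) : |x| ≤ jb x := by
  rw [← Real.sqrt_sq_eq_abs]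
  exact Real.sqrt_le_sqrt (by nlinarith)

lemma jb_le (x : ℝ) : jb x ≤ 1 + |x| := by
  rw [show (1:ℝ) + |x| = Real.sqrt ((1+|x|)^2) by rw [Real.sqrt_sq (by positivity)]]
  apply Real.sqrt_le_sqrt
  have := abs_nonneg x
  nlinarith [sq_abs x]

lemma jb_mono {s x : ℝ} (h : |s| ≤ |x|) : jb s ≤ jb x := by
  apply Real.sqrt_le_sqrt
  nlinarith [sq_abs s, sq_abs x, abs_nonneg s]

lemma hasDerivAt_G {q : ℝ} (hq : 0 < q) (u : ℝ) :
    HasDerivAt (fun v : ℝ => |v| ^ q * v) ((q + 1) * |u| ^ q) u := by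
  rcases lt_trichotomy u 0 with hu | hu | hu
  · have h0 : HasDerivAt (fun w : ℝ => w ^ (q + 1)) ((q + 1) * (-u) ^ q) (-u) := by
      have := Real.hasDerivAt_rpow_const (x := -u) (p := q + 1) (Or.inl (by linarith))
      simpa using this
    have h1 : HasDerivAt (fun v : ℝ => (-v) ^ (q + 1)) (-((q + 1) * (-u) ^ q)) u := by
      have := h0.comp u (hasDerivAt_neg u)
      simpa [mul_comm, Function.comp_def] using this
    have h2 : HasDerivAt (fun v : ℝ => -((-v) ^ (q + 1))) ((q + 1) * |u| ^ q) u := by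
      have := h1.neg
      simpa [abs_of_neg hu, Pi.neg_def] using this
    refine h2.congr_of_eventuallyEq ?_
    filter_upwards [eventually_lt_nhds hu] with v hv
    rw [abs_of_neg hv, Real.rpow_add_one (by linarith : -v ≠ 0)]
    ring
  · subst hu
    rw [hasDerivAt_iff_tendsto_slope]
    have hcont : Tendsto (fun v : ℝ => |v| ^ q) (nhds 0) (nhds 0) := by
      have h1 : ContinuousAt (fun v : ℝ => |v| ^ q) 0 :=
        (Real.continuousAt_rpow_const _ _ (Or.inr hq.le)).comp continuous_abs.continuousAt
      simpa [Real.zero_rpow hq.ne'] using h1.tendsto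
    have hlim : Tendsto (fun v : ℝ => |v| ^ q) (nhdsWithin 0 {(0:ℝ)}ᶜ)
        (nhds ((q + 1) * |(0:ℝ)| ^ q)) := by
      rw [show (q + 1) * |(0:ℝ)| ^ q = 0 by simp [Real.zero_rpow hq.ne']]
      exact hcont.mono_left nhdsWithin_le_nhds
    refine hlim.congr' ?_
    filter_upwards [self_mem_nhdsWithin] with v hv
    have hv' : v ≠ 0 := hv
    rw [slope_def_field]
    field_simp
    simp
  · have h0 : HasDerivAt (fun w : ℝ => w ^ (q + 1)) ((q + 1) * |u| ^ q) u := by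
      have := Real.hasDerivAt_rpow_const (x := u) (p := q + 1) (Or.inl hu.ne')
      simpa [abs_of_pos hu] using this
    refine h0.congr_of_eventuallyEq ?_
    filter_upwards [eventually_gt_nhds hu] with v hv
    rw [abs_of_pos hv, Real.rpow_add_one hv.ne']

lemma mvt_aux {f f' : ℝ → ℝ} (hf : ∀ t, HasDerivAt f (f' t) t) (x y : ℝ) :
    ∃ t : ℝ, |t| ≤ max |x| |y| ∧ f x - f y = f' t * (x - y) := by
  rcases lt_trichotomy x y with h | h | h
  · obtain ⟨t, ht, hteq⟩ := exists_hasDerivAt_eq_slope f f' h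
      (fun t _ => (hf t).continuousAt.continuousWithinAt) (fun t _ => hf t)
    refine ⟨t, ?_, ?_⟩
    · rw [abs_le]
      constructor
      · calc -(max |x| |y|) ≤ -|x| := by simp
          _ ≤ x := neg_abs_le x
          _ ≤ t := ht.1.le
      · calc t ≤ y := ht.2.le
          _ ≤ |y| := le_abs_self y
          _ ≤ max |x| |y| := le_max_right _ _
    · rw [eq_div_iff (by linarith : y - x ≠ 0)] at hteq
      linarith [hteq]
  · exact ⟨x, by simp [h], by simp [h]⟩
  · obtain ⟨t, ht, hteq⟩ := exists_hasDerivAt_eq_slope f f' h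
      (fun t _ => (hf t).continuousAt.continuousWithinAt) (fun t _ => hf t)
    refine ⟨t, ?_, ?_⟩
    · rw [abs_le]
      constructor
      · calc -(max |x| |y|) ≤ -|y| := by simp
          _ ≤ y := neg_abs_le y
          _ ≤ t := ht.1.le
      · calc t ≤ x := ht.2.le
          _ ≤ |x| := le_abs_self x
          _ ≤ max |x| |y| := le_max_left _ _
    · rw [eq_div_iff (by linarith : x - y ≠ 0)] at hteq
      linarith [hteq]

lemma rpow_compare {L b t r : ℝ} (hL : 1 ≤ L) (hb : 0 < b) (hbt : b ≤ t) (htL : t ≤ L * b)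
    (hr : |r| ≤ 1) : b ^ r ≤ L * t ^ r := by
  have ht : 0 < t := lt_of_lt_of_le hb hbt
  rcases le_or_gt 0 r with h0 | h0
  · calc b ^ r ≤ t ^ r := Real.rpow_le_rpow hb.le hbt h0
      _ ≤ L * t ^ r := le_mul_of_one_le_left (Real.rpow_nonneg ht.le r) hL
  · have hLb : 0 < t / L := div_pos ht (by linarith)
    have h1 : t / L ≤ b := (div_le_iff₀ (by linarith)).2 (by linarith [htL])
    have h2 : b ^ r ≤ (t / L) ^ r := Real.rpow_le_rpow_of_nonpos hLb h1 h0.le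
    have h3 : (t / L) ^ r = t ^ r / L ^ r := Real.div_rpow ht.le (by linarith : (0:ℝ) ≤ L) r
    have h4 : L ^ (-r) ≤ L ^ (1:ℝ) := by
      apply Real.rpow_le_rpow_of_exponent_le hL
      rcases abs_le.1 hr with ⟨ha, hb'⟩
      linarith
    calc b ^ r ≤ (t / L) ^ r := h2
      _ = t ^ r * (L ^ r)⁻¹ := by rw [h3, div_eq_mul_inv]
      _ = t ^ r * L ^ (-r) := by rw [Real.rpow_neg (by linarith : (0:ℝ) ≤ L)]
      _ ≤ t ^ r * L := by
          apply mul_le_mul_of_nonneg_left _ (Real.rpow_nonneg ht.le r)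
          simpa using h4
      _ = L * t ^ r := mul_comm _ _

lemma rpow_diff_bound {q lo hi : ℝ} (hq : 0 < q) (hlo : 0 < lo) :
    ∀ u v : ℝ, lo ≤ u → u ≤ hi → lo ≤ v → v ≤ hi →
      |u ^ q - v ^ q| ≤ q * (lo ^ (q-1) + hi ^ (q-1)) * |u - v| := by
  have main : ∀ u v : ℝ, lo ≤ u → u ≤ hi → lo ≤ v → v ≤ hi → v < u →
      |u ^ q - v ^ q| ≤ q * (lo ^ (q-1) + hi ^ (q-1)) * |u - v| := by
    intro u v hu1 hu2 hv1 hv2 hvu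
    obtain ⟨ξ, hξ, heq⟩ := exists_hasDerivAt_eq_slope (fun t => t ^ q) (fun t => q * t ^ (q-1))
      hvu
      (fun t ht => (Real.continuousAt_rpow_const t q
        (Or.inl (by rcases ht with ⟨h1, _⟩; nlinarith [hlo, hv1]))).continuousWithinAt)
      (fun t ht => Real.hasDerivAt_rpow_const (Or.inl (by
        rcases ht with ⟨h1, _⟩; nlinarith [hlo, hv1])))
    have hξlo : lo ≤ ξ := le_trans hv1 hξ.1.le
    have hξhi : ξ ≤ hi := le_trans hξ.2.le hu2
    have hξpos : 0 < ξ := lt_of_lt_of_le hlo hξlo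
    have heq2 : u ^ q - v ^ q = q * ξ ^ (q-1) * (u - v) := by
      rw [eq_div_iff (by linarith : u - v ≠ 0)] at heq
      linarith [heq]
    have hbound : ξ ^ (q-1) ≤ lo ^ (q-1) + hi ^ (q-1) := by
      rcases le_or_gt 1 q with h1 | h1
      · have : ξ ^ (q-1) ≤ hi ^ (q-1) := Real.rpow_le_rpow hξpos.le hξhi (by linarith)
        have := Real.rpow_nonneg hlo.le (q-1)
        linarith
      · have : ξ ^ (q-1) ≤ lo ^ (q-1) := Real.rpow_le_rpow_of_nonpos hlo hξlo (by linarith)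
        have h2 : (0:ℝ) ≤ hi ^ (q-1) := Real.rpow_nonneg (by linarith : (0:ℝ) ≤ hi) (q-1)
        linarith
    rw [heq2, abs_mul, abs_of_nonneg (by positivity : (0:ℝ) ≤ q * ξ ^ (q-1))]
    apply mul_le_mul_of_nonneg_right _ (abs_nonneg _)
    have : (0:ℝ) < q := hq
    nlinarith [hbound]
  intro u v hu1 hu2 hv1 hv2
  rcases lt_trichotomy v u with h | h | h
  · exact main u v hu1 hu2 hv1 hv2 h
  · subst h; simp
  · have := main v u hv1 hv2 hu1 hu2 h
    rwa [abs_sub_comm (v ^ q), abs_sub_comm v u] at this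

lemma Hmono (hp1 : 1 < p) (hp3 : p ≤ 3) {t x : ℝ} (h : |t| ≤ |x|) :
    |t| * jb t ^ (p - 2) ≤ 2 * (|x| * jb x ^ (p - 2)) := by
  rcases le_or_gt 2 p with h2 | h2
  · have hj := jb_mono h
    have h3 : jb t ^ (p-2) ≤ jb x ^ (p-2) := Real.rpow_le_rpow (jb_pos t).le hj (by linarith)
    nlinarith [Real.rpow_nonneg (jb_pos t).le (p-2), abs_nonneg t, abs_nonneg x,
      Real.rpow_nonneg (jb_pos x).le (p-2)]
  · have htj := jb_pos t
    have hxj := jb_pos x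
    have hj := jb_mono h
    have key : |t| * jb x ^ (2-p) ≤ 2 * |x| * jb t ^ (2-p) := by
      have hratio : (1:ℝ) ≤ jb x / jb t := (one_le_div htj).2 hj
      have e1 : (jb x / jb t) ^ (2-p) ≤ (jb x / jb t) ^ (1:ℝ) :=
        Real.rpow_le_rpow_of_exponent_le hratio (by linarith)
      have e2 : jb x ^ (2-p) ≤ jb t ^ (2-p) * (jb x / jb t) := by
        have := Real.div_rpow hxj.le htj.le (2-p)
        rw [this, Real.rpow_one] at e1
        rw [div_le_iff₀ (Real.rpow_pos_of_pos htj _)] at e1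
        linarith [e1]
      have e3 : |t| * jb x ≤ 2 * |x| * jb t := by
        have l1 : jb x ≤ 1 + |x| := jb_le x
        have l2 : |t| ≤ |x| := h
        have l3 : 1 ≤ jb t := one_le_jb t
        have l4 : |t| ≤ jb t := abs_le_jb t
        nlinarith [abs_nonneg t, abs_nonneg x]
      calc |t| * jb x ^ (2-p) ≤ |t| * (jb t ^ (2-p) * (jb x / jb t)) := by
            apply mul_le_mul_of_nonneg_left e2 (abs_nonneg t)
        _ = (|t| * jb x / jb t) * jb t ^ (2-p) := by ring
        _ ≤ (2 * |x|) * jb t ^ (2-p) := by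
            apply mul_le_mul_of_nonneg_right _ (Real.rpow_nonneg htj.le _)
            rw [div_le_iff₀ htj]
            nlinarith [e3]
        _ = 2 * |x| * jb t ^ (2-p) := by ring
    have inv1 : jb t ^ (p-2) = (jb t ^ (2-p))⁻¹ := by
      rw [show p - 2 = -(2-p) by ring, Real.rpow_neg htj.le]
    have inv2 : jb x ^ (p-2) = (jb x ^ (2-p))⁻¹ := by
      rw [show p - 2 = -(2-p) by ring, Real.rpow_neg hxj.le]
    rw [inv1, inv2, mul_inv_le_iff₀ (Real.rpow_pos_of_pos htj _)]
    rw [show 2 * (|x| * (jb x ^ (2-p))⁻¹) * jb t ^ (2-p)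
        = (2 * |x| * jb t ^ (2-p)) * (jb x ^ (2-p))⁻¹ by ring]
    rw [show 2 * |x| * jb t ^ (2-p) * (jb x ^ (2-p))⁻¹
        = (2 * |x| * jb t ^ (2-p)) / (jb x ^ (2-p)) by ring,
      le_div_iff₀ (Real.rpow_pos_of_pos hxj _)]
    linarith [key]

lemma key_bound {a : ℝ} (hp1 : 1 < p) (hp3 : p ≤ 3) (ha : 0 < a) :
    ∃ c₂ > 0, ∀ x : ℝ,
      |p * (|a + x| ^ (p-1) - a ^ (p-1))| ≤ c₂ * (|x| * jb x ^ (p-2)) := by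
  set q := p - 1 with hqdef
  have hq : 0 < q := by simp [hqdef]; linarith
  have hq2 : q ≤ 2 := by simp [hqdef]; linarith
  have hr1 : |p - 2| ≤ 1 := abs_le.2 ⟨by linarith, by linarith⟩
  set M : ℝ := (a/2) ^ (q-1) + (3*a/2) ^ (q-1) with hMdef
  have hM : 0 < M := by
    have := Real.rpow_pos_of_pos (by linarith : (0:ℝ) < a/2) (q-1)
    have := Real.rpow_pos_of_pos (by linarith : (0:ℝ) < 3*a/2) (q-1)
    positivity
  set B : ℝ := jb (a/2) with hBdef
  have hB1 : 1 ≤ B := one_le_jb _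
  set L : ℝ := 1 + 2/a with hLdef
  have hL1 : 1 ≤ L := by
    have : 0 < 2/a := by positivity
    simp [hLdef]; linarith
  refine ⟨p * (2*M) * B + 18 * p * L, by positivity, fun x => ?_⟩
  have hjbpow : (0:ℝ) ≤ |x| * jb x ^ (p-2) :=
    mul_nonneg (abs_nonneg x) (Real.rpow_nonneg (jb_pos x).le _)
  rcases le_or_gt |x| (a/2) with hx | hx
  · have hax1 : a/2 ≤ a + x := by rcases abs_le.1 hx with ⟨h1, _⟩; linarith
    have hax2 : a + x ≤ 3*a/2 := by rcases abs_le.1 hx with ⟨_, h2⟩; linarith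
    have habs : |a + x| = a + x := abs_of_pos (by linarith)
    have hdiff := rpow_diff_bound hq (by linarith : (0:ℝ) < a/2) (a+x) a
      hax1 hax2 (by linarith) (by linarith)
    rw [show a + x - a = x by ring] at hdiff
    have hone : 1 ≤ B * jb x ^ (p-2) := by
      have := rpow_compare (b := 1) (t := jb x) (r := p-2) hB1 one_pos (one_le_jb x)
        (by rw [mul_one]; exact jb_mono (by rwa [abs_of_pos (by linarith : (0:ℝ) < a/2)])) hr1
      rwa [Real.one_rpow] at this
    have step : |p * (|a + x| ^ q - a ^ q)| ≤ p * (q * M * |x|) := by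
      rw [abs_mul, abs_of_pos (by linarith : (0:ℝ) < p), habs]
      rw [← hMdef] at hdiff
      exact mul_le_mul_of_nonneg_left hdiff (by linarith)
    have hnn : (0:ℝ) ≤ p * M * |x| :=
      mul_nonneg (mul_nonneg (by linarith) hM.le) (abs_nonneg x)
    calc |p * (|a + x| ^ q - a ^ q)| ≤ p * (q * M * |x|) := step
      _ ≤ p * (2 * M) * |x| := by nlinarith [hnn]
      _ = (p * (2*M)) * (|x| * 1) := by ring
      _ ≤ (p * (2*M)) * (|x| * (B * jb x ^ (p-2))) := by
          apply mul_le_mul_of_nonneg_left _ (by positivity)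
          exact mul_le_mul_of_nonneg_left hone (abs_nonneg x)
      _ = (p * (2*M) * B) * (|x| * jb x ^ (p-2)) := by ring
      _ ≤ (p * (2*M) * B + 18 * p * L) * (|x| * jb x ^ (p-2)) := by
          have h18 : (0:ℝ) ≤ 18 * p * L :=
            mul_nonneg (mul_nonneg (by norm_num) (by linarith)) (by linarith)
          rw [add_mul]; linarith [mul_nonneg h18 hjbpow]
  · have hx0 : 0 < |x| := lt_of_le_of_lt (by positivity) hx
    have h3x : |a + x| ≤ 3 * |x| := by
      calc |a + x| ≤ |a| + |x| := abs_add_le a x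
        _ = a + |x| := by rw [abs_of_pos ha]
        _ ≤ 3 * |x| := by linarith
    have ha3x : a ≤ 3 * |x| := by linarith
    have e1 : |a + x| ^ q ≤ (3 * |x|) ^ q := Real.rpow_le_rpow (abs_nonneg _) h3x hq.le
    have e2 : a ^ q ≤ (3 * |x|) ^ q := Real.rpow_le_rpow ha.le ha3x hq.le
    have e3 : (3 * |x|) ^ q = 3 ^ q * |x| ^ q := Real.mul_rpow (by norm_num) (abs_nonneg x)
    have e4 : (3:ℝ) ^ q ≤ 9 := by
      calc (3:ℝ) ^ q ≤ (3:ℝ) ^ (2:ℝ) := Real.rpow_le_rpow_of_exponent_le (by norm_num) hq2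
        _ = 9 := by
          rw [show (2:ℝ) = ((2:ℕ):ℝ) by norm_num, Real.rpow_natCast]; norm_num
    have e5 : |x| ^ q = |x| * |x| ^ (q-1) := by
      rw [show q = 1 + (q-1) by ring, Real.rpow_add hx0, Real.rpow_one]
      ring_nf
    have e6 : |x| ^ (q-1) ≤ L * jb x ^ (p-2) := by
      have hjL : jb x ≤ L * |x| := by
        have h1 : jb x ≤ 1 + |x| := jb_le x
        have h2 : 1 ≤ 2/a * |x| := by
          rw [div_mul_eq_mul_div, le_div_iff₀ ha]; linarith
        calc jb x ≤ 1 + |x| := h1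
          _ ≤ 2/a * |x| + |x| := by linarith
          _ = L * |x| := by simp [hLdef]; ring
      have := rpow_compare hL1 hx0 (abs_le_jb x) hjL hr1
      rw [show q - 1 = p - 2 by rw [hqdef]; ring]; exact this
    have epos : (0:ℝ) ≤ |x| ^ (q-1) := Real.rpow_nonneg (abs_nonneg x) _
    have e7 : |p * (|a + x| ^ q - a ^ q)| ≤ p * (2 * (3 * |x|) ^ q) := by
      rw [abs_mul, abs_of_pos (by linarith : (0:ℝ) < p)]
      apply mul_le_mul_of_nonneg_left _ (by linarith)
      have h1 : (0:ℝ) ≤ |a + x| ^ q := Real.rpow_nonneg (abs_nonneg _) _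
      have h2 : (0:ℝ) ≤ a ^ q := Real.rpow_nonneg ha.le _
      rw [abs_le]
      constructor <;> nlinarith [e1, e2]
    calc |p * (|a + x| ^ q - a ^ q)| ≤ p * (2 * (3 * |x|) ^ q) := e7
      _ = 2 * p * (3 ^ q * (|x| * |x| ^ (q-1))) := by rw [e3, e5]; ring
      _ ≤ 2 * p * (9 * (|x| * (L * jb x ^ (p-2)))) := by
          apply mul_le_mul_of_nonneg_left _ (by linarith)
          apply mul_le_mul e4 (mul_le_mul_of_nonneg_left e6 (abs_nonneg x))
            (mul_nonneg (abs_nonneg x) epos) (by norm_num)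
      _ = (18 * p * L) * (|x| * jb x ^ (p-2)) := by ring
      _ ≤ (p * (2*M) * B + 18 * p * L) * (|x| * jb x ^ (p-2)) := by
          have hc1 : (0:ℝ) ≤ p * (2*M) * B :=
            mul_nonneg (mul_nonneg (by linarith) (by linarith)) (by linarith)
          rw [add_mul]; linarith [mul_nonneg hc1 hjbpow]

lemma nfun_hasDerivAt (hp1 : 1 < p) (ρ : ℝ) (z : ℝ) :
    HasDerivAt (fun w : ℝ => nfun p w ρ)
      (ρ * (p * (|cp p + z| ^ (p-1) - cp p ^ (p-1)))) z := by
  have hq : (0:ℝ) < p - 1 := by linarith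
  have hF : HasDerivAt (fun w : ℝ => |cp p + w| ^ (p-1) * (cp p + w))
      (p * |cp p + z| ^ (p-1)) z := by
    have h1 := hasDerivAt_G hq (cp p + z)
    have h2 : HasDerivAt (fun w : ℝ => cp p + w) 1 z := (hasDerivAt_id z).const_add (cp p)
    have h3 := h1.comp z h2
    simp only [Function.comp_def] at h3
    exact h3.congr_deriv (by ring)
  have hlin : HasDerivAt (fun w : ℝ => p * kap0 p * w) (p * kap0 p) z := by
    simpa using (hasDerivAt_id z).const_mul (p * kap0 p)
  have hinner := (hF.sub hlin).sub_const (kap0 p ^ (p/(p-1)))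
  have h := hinner.const_mul ρ
  have hval : ρ * (p * |cp p + z| ^ (p-1) - p * kap0 p)
      = ρ * (p * (|cp p + z| ^ (p-1) - cp p ^ (p-1))) := by
    rw [cp_rpow hp1]; ring
  rw [hval] at h
  exact h

end Stmt13Aux

open Stmt13Aux in
theorem stmt13 (p : ℝ) (hp1 : 1 < p) (hp3 : p ≤ 3) :
    ∃ c > 0, ∀ x y ρ : ℝ, ρ ∈ Set.Icc (0:ℝ) 1 →
      |nfun p x ρ| ≤ c * ρ * |x| ^ 2 * jb x ^ (p - 2) ∧
      |deriv (fun z : ℝ => nfun p z ρ) x| ≤ c * ρ * |x| * jb x ^ (p - 2) ∧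
      |nfun p x ρ - nfun p y ρ|
        ≤ c * ρ * |x - y| * (|x| * jb x ^ (p - 2) + |y| * jb y ^ (p - 2)) := by
  obtain ⟨c₂, hc₂, hkey⟩ := key_bound (a := cp p) hp1 hp3 (cp_pos hp1)
  refine ⟨2 * c₂, by linarith, ?_⟩
  intro x y ρ hρ
  obtain ⟨hρ0, hρ1⟩ := hρ
  have hd := nfun_hasDerivAt (ρ := ρ) hp1
  -- pointwise derivative bound (for arbitrary point t)
  have hder_bound : ∀ t : ℝ, |ρ * (p * (|cp p + t| ^ (p-1) - cp p ^ (p-1)))|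
      ≤ ρ * (c₂ * (|t| * jb t ^ (p-2))) := by
    intro t
    rw [abs_mul, abs_of_nonneg hρ0]
    exact mul_le_mul_of_nonneg_left (hkey t) hρ0
  -- Lipschitz estimate for arbitrary pair
  have lip : ∀ u v : ℝ, |nfun p u ρ - nfun p v ρ|
      ≤ 2 * c₂ * ρ * |u - v| * (|u| * jb u ^ (p-2) + |v| * jb v ^ (p-2)) := by
    intro u v
    obtain ⟨t, htmax, hteq⟩ := mvt_aux hd u v
    have hS : |t| * jb t ^ (p-2)
        ≤ 2 * (|u| * jb u ^ (p-2) + |v| * jb v ^ (p-2)) := by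
      have hu : (0:ℝ) ≤ |u| * jb u ^ (p-2) :=
        mul_nonneg (abs_nonneg u) (Real.rpow_nonneg (jb_pos u).le _)
      have hv : (0:ℝ) ≤ |v| * jb v ^ (p-2) :=
        mul_nonneg (abs_nonneg v) (Real.rpow_nonneg (jb_pos v).le _)
      rcases max_cases |u| |v| with ⟨hm, _⟩ | ⟨hm, _⟩
      · have := Hmono hp1 hp3 (t := t) (x := u) (by rwa [hm] at htmax)
        linarith
      · have := Hmono hp1 hp3 (t := t) (x := v) (by rwa [hm] at htmax)
        linarith
    calc |nfun p u ρ - nfun p v ρ|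
        = |ρ * (p * (|cp p + t| ^ (p-1) - cp p ^ (p-1)))| * |u - v| := by
          rw [hteq, abs_mul]
      _ ≤ (ρ * (c₂ * (|t| * jb t ^ (p-2)))) * |u - v| :=
          mul_le_mul_of_nonneg_right (hder_bound t) (abs_nonneg _)
      _ ≤ (ρ * (c₂ * (2 * (|u| * jb u ^ (p-2) + |v| * jb v ^ (p-2))))) * |u - v| := by
          apply mul_le_mul_of_nonneg_right _ (abs_nonneg _)
          apply mul_le_mul_of_nonneg_left _ hρ0
          exact mul_le_mul_of_nonneg_left hS hc₂.le
      _ = 2 * c₂ * ρ * |u - v| * (|u| * jb u ^ (p-2) + |v| * jb v ^ (p-2)) := by ring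
  have hzero : nfun p 0 ρ = 0 := by
    have hsplit : cp p ^ (p-1) * cp p = cp p ^ p := by
      rw [← Real.rpow_add_one (ne_of_gt (cp_pos hp1)) (p-1)]
      ring_nf
    unfold nfun
    rw [add_zero, abs_of_pos (cp_pos hp1), cp_rpow_p hp1, hsplit]
    ring
  refine ⟨?_, ?_, lip x y⟩
  · have := lip x 0
    simp only [hzero, sub_zero, abs_zero, zero_mul, add_zero] at this
    calc |nfun p x ρ| ≤ 2 * c₂ * ρ * |x| * (|x| * jb x ^ (p-2)) := this
      _ = 2 * c₂ * ρ * |x| ^ 2 * jb x ^ (p-2) := by ring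
  · rw [(hd x).deriv]
    calc |ρ * (p * (|cp p + x| ^ (p-1) - cp p ^ (p-1)))|
        ≤ ρ * (c₂ * (|x| * jb x ^ (p-2))) := hder_bound x
      _ = c₂ * (ρ * |x| * jb x ^ (p-2)) := by ring
      _ ≤ 2 * c₂ * (ρ * |x| * jb x ^ (p-2)) := by
          apply mul_le_mul_of_nonneg_right (by linarith)
          exact mul_nonneg (mul_nonneg hρ0 (abs_nonneg x))
            (Real.rpow_nonneg (jb_pos x).le _)
      _ = 2 * c₂ * ρ * |x| * jb x ^ (p-2) := by ring
end
end
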